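/- Let S = (a,b) ⊆ ℝ be an open interval and let W, A, B, Q : S → Matrix N N ℂ be such that W·A is twice continuously differentiable, W·B is continuously differentiable, and W, Q are continuous on S, satisfying the symmetry equations on S: A(x)* W(x) = W(x) A(x), B(x)* W(x) = (W A)'(x) − W(x) B(x), and Q(x)* W(x) = ½ (W A)''(x) − (W B)'(x) + W(x) Q(x). Then the operator 𝒜F = ½ A F'' + B F' + Q F is formally self-adjoint with respect to W: for all twice continuously differentiable matrix-valued functions F, G : S → Matrix N N ℂ with compact support contained in S, ∫_S G(x)* W(x) (½ A(x) F''(x) + B(x) F'(x) + Q(x) F(x)) dx = ∫_S (½ A(x) G''(x) + B(x) G'(x) + Q(x) G(x))* W(x) F(x) dx. -/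

import Mathlib

open MeasureTheory Filter Topology Matrix

namespace Stmt5Aux

variable {N : ℕ}

/-- Entrywise derivative statement for matrix-valued functions. -/
def EDeriv (f : ℝ → Matrix (Fin N) (Fin N) ℂ) (f' : Matrix (Fin N) (Fin N) ℂ) (x : ℝ) : Prop :=
  ∀ i j, HasDerivAt (fun y => f y i j) (f' i j) x

theorem EDeriv.mul {u v : ℝ → Matrix (Fin N) (Fin N) ℂ} {u' v' : Matrix (Fin N) (Fin N) ℂ}
    {x : ℝ} (hu : EDeriv u u' x) (hv : EDeriv v v' x) :
    EDeriv (fun y => u y * v y) (u' * v x + u x * v') x := by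
  intro i j
  have h : (fun y => (u y * v y) i j) = fun y => ∑ k, u y i k * v y k j := by
    funext y; simp [Matrix.mul_apply]
  rw [h]
  have hsum : HasDerivAt (fun y => ∑ k, u y i k * v y k j)
      (∑ k, (u' i k * v x k j + u x i k * v' k j)) x :=
    HasDerivAt.fun_sum fun k _ => (hu i k).mul (hv k j)
  simpa [Matrix.add_apply, Matrix.mul_apply, Finset.sum_add_distrib] using hsum

theorem EDeriv.conjT {u : ℝ → Matrix (Fin N) (Fin N) ℂ} {u' : Matrix (Fin N) (Fin N) ℂ}
    {x : ℝ} (hu : EDeriv u u' x) : EDeriv (fun y => (u y)ᴴ) u'ᴴ x := by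
  intro i j
  simpa [Matrix.conjTranspose_apply] using (hu j i).star

theorem EDeriv.add {u v : ℝ → Matrix (Fin N) (Fin N) ℂ} {u' v' : Matrix (Fin N) (Fin N) ℂ}
    {x : ℝ} (hu : EDeriv u u' x) (hv : EDeriv v v' x) :
    EDeriv (fun y => u y + v y) (u' + v') x := fun i j => by
  simpa [Matrix.add_apply, Pi.add_def] using (hu i j).add (hv i j)

theorem EDeriv.sub {u v : ℝ → Matrix (Fin N) (Fin N) ℂ} {u' v' : Matrix (Fin N) (Fin N) ℂ}
    {x : ℝ} (hu : EDeriv u u' x) (hv : EDeriv v v' x) :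
    EDeriv (fun y => u y - v y) (u' - v') x := fun i j => by
  simpa [Matrix.sub_apply, Pi.sub_def] using (hu i j).sub (hv i j)

theorem EDeriv.smulc {u : ℝ → Matrix (Fin N) (Fin N) ℂ} {u' : Matrix (Fin N) (Fin N) ℂ}
    {x : ℝ} (c : ℂ) (hu : EDeriv u u' x) :
    EDeriv (fun y => c • u y) (c • u') x := fun i j => by
  simpa [Matrix.smul_apply, Pi.smul_def, smul_eq_mul] using (hu i j).const_smul c

theorem EDeriv.congr_val {f : ℝ → Matrix (Fin N) (Fin N) ℂ}
    {v v' : Matrix (Fin N) (Fin N) ℂ} {x : ℝ} (h : EDeriv f v x) (hv : v = v') :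
    EDeriv f v' x := hv ▸ h

/-- Entrywise continuity on a set. -/
def EC (u : ℝ → Matrix (Fin N) (Fin N) ℂ) (S : Set ℝ) : Prop :=
  ∀ i j, ContinuousOn (fun x => u x i j) S

theorem EC.mul {u v : ℝ → Matrix (Fin N) (Fin N) ℂ} {S : Set ℝ}
    (hu : EC u S) (hv : EC v S) : EC (fun x => u x * v x) S := by
  intro i j
  have h : (fun x => (u x * v x) i j) = fun x => ∑ k, u x i k * v x k j := by
    funext y; simp [Matrix.mul_apply]
  rw [h]
  exact continuousOn_finset_sum _ fun k _ => (hu i k).mul (hv k j)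

theorem EC.conjT {u : ℝ → Matrix (Fin N) (Fin N) ℂ} {S : Set ℝ}
    (hu : EC u S) : EC (fun x => (u x)ᴴ) S := fun i j => by
  simpa [Matrix.conjTranspose_apply] using (hu j i).star

theorem EC.add {u v : ℝ → Matrix (Fin N) (Fin N) ℂ} {S : Set ℝ}
    (hu : EC u S) (hv : EC v S) : EC (fun x => u x + v x) S := fun i j =>
  ((hu i j).add (hv i j))

theorem EC.sub {u v : ℝ → Matrix (Fin N) (Fin N) ℂ} {S : Set ℝ}
    (hu : EC u S) (hv : EC v S) : EC (fun x => u x - v x) S := fun i j =>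
  ((hu i j).sub (hv i j))

theorem EC.smulc {u : ℝ → Matrix (Fin N) (Fin N) ℂ} {S : Set ℝ} (c : ℂ)
    (hu : EC u S) : EC (fun x => c • u x) S := fun i j => by
  simpa [Matrix.smul_apply, Pi.smul_def, smul_eq_mul] using (hu i j).const_smul c

theorem cont_glue {f : ℝ → ℂ} {S T : Set ℝ} (hSo : IsOpen S) (hT : IsClosed T)
    (hTS : T ⊆ S) (hc : ContinuousOn f S) (h0 : ∀ x ∉ T, f x = 0) : Continuous f := by
  rw [continuous_iff_continuousAt]
  intro x
  by_cases hx : x ∈ S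
  · exact hc.continuousAt (hSo.mem_nhds hx)
  · have hmem : Tᶜ ∈ 𝓝 x := hT.isOpen_compl.mem_nhds fun h => hx (hTS h)
    have hev : f =ᶠ[𝓝 x] fun _ => (0 : ℂ) := by
      filter_upwards [hmem] with y hy using h0 y hy
    exact hev.continuousAt

theorem integral_deriv_zero {S T : Set ℝ} (hSo : IsOpen S) (hT : IsCompact T)
    (hTc : IsClosed T) (hTS : T ⊆ S) {φ ψ : ℝ → ℂ}
    (hφ0 : ∀ x ∉ T, φ x = 0) (hψ0 : ∀ x ∉ T, ψ x = 0)
    (hd : ∀ x ∈ S, HasDerivAt φ (ψ x) x) (hψc : Continuous ψ) :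
    ∫ x in S, ψ x = 0 := by
  have hder : ∀ x, HasDerivAt φ (ψ x) x := by
    intro x
    by_cases hx : x ∈ S
    · exact hd x hx
    · have hxT : x ∉ T := fun h => hx (hTS h)
      have hmem : Tᶜ ∈ 𝓝 x := hTc.isOpen_compl.mem_nhds hxT
      have hev : φ =ᶠ[𝓝 x] fun _ => (0 : ℂ) := by
        filter_upwards [hmem] with y hy using hφ0 y hy
      rw [hψ0 x hxT]
      exact (hasDerivAt_const x (0 : ℂ)).congr_of_eventuallyEq hev
  obtain ⟨r, hr⟩ := hT.isBounded.subset_closedBall 0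
  set R : ℝ := max r 0 + 1 with hR
  have hTR : T ⊆ Set.Ioo (-R) R := by
    intro x hx
    have h1 : |x| ≤ r := by
      simpa [Real.norm_eq_abs] using mem_closedBall_zero_iff.mp (hr hx)
    have h2 := abs_le.mp h1
    have h3 : r ≤ max r 0 := le_max_left _ _
    constructor <;> [nlinarith [h2.1]; nlinarith [h2.2]]
  have h1 : ∫ x in S, ψ x = ∫ x, ψ x :=
    setIntegral_eq_integral_of_forall_compl_eq_zero fun x hx => hψ0 x fun h => hx (hTS h)
  have h2 : ∫ x, ψ x = ∫ x in Set.Ioc (-R) R, ψ x :=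
    (setIntegral_eq_integral_of_forall_compl_eq_zero fun x hx =>
      hψ0 x fun h => hx (Set.Ioo_subset_Ioc_self (hTR h))).symm
  have hle : -R ≤ R := by
    have : (0:ℝ) ≤ max r 0 := le_max_right _ _
    linarith
  have h3 : ∫ x in Set.Ioc (-R) R, ψ x = ∫ x in (-R)..R, ψ x :=
    (intervalIntegral.integral_of_le hle).symm
  have h4 : ∫ x in (-R)..R, ψ x = φ R - φ (-R) :=
    intervalIntegral.integral_eq_sub_of_hasDerivAt (fun x _ => hder x)
      (hψc.intervalIntegrable _ _)
  have hφR : φ R = 0 := hφ0 R fun h => absurd (hTR h).2 (lt_irrefl R)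
  have hφR' : φ (-R) = 0 := hφ0 (-R) fun h => absurd (hTR h).1 (lt_irrefl (-R))
  rw [h1, h2, h3, h4, hφR, hφR', sub_zero]

/-- The pointwise algebraic identity behind symmetry of the operator. -/
theorem main_calc (w aa bb qq f f1 f2 g g1 g2 m m1 m2 p p1 : Matrix (Fin N) (Fin N) ℂ)
    (hm : w * aa = m) (hp : w * bb = p)
    (h1 : aaᴴ * w = m) (h2 : bbᴴ * w = m1 - p)
    (h3 : qqᴴ * w = (1/2 : ℂ) • m2 - p1 + w * qq) :
    ((1/2 : ℂ) • (aa * g2) + bb * g1 + qq * g)ᴴ * w * f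
      - gᴴ * w * ((1/2 : ℂ) • (aa * f2) + bb * f1 + qq * f)
    = (1/2 : ℂ) • (g2ᴴ * m * f) + g1ᴴ * (m1 - p) * f
      + (1/2 : ℂ) • (gᴴ * m2 * f) - gᴴ * p1 * f
      - (1/2 : ℂ) • (gᴴ * m * f2) - gᴴ * p * f1 := by
  have hstar : (starRingEnd ℂ) (1/2 : ℂ) = (1/2 : ℂ) := by
    rw [map_div₀, _root_.map_one, map_ofNat]
  have h2star : (starRingEnd ℂ) (2 : ℂ) = 2 := map_ofNat _ 2
  have hR : ((1/2 : ℂ) • (aa * g2) + bb * g1 + qq * g)ᴴ * w * f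
      = (1/2 : ℂ) • (g2ᴴ * (aaᴴ * w) * f) + g1ᴴ * (bbᴴ * w) * f + gᴴ * (qqᴴ * w) * f := by
    simp [Matrix.conjTranspose_add, Matrix.conjTranspose_smul, Matrix.conjTranspose_mul,
      hstar, h2star, Matrix.add_mul, smul_mul_assoc, Matrix.mul_assoc]
  have hL : gᴴ * w * ((1/2 : ℂ) • (aa * f2) + bb * f1 + qq * f)
      = (1/2 : ℂ) • (gᴴ * (w * aa) * f2) + gᴴ * (w * bb) * f1 + gᴴ * (w * qq) * f := by
    simp [Matrix.mul_add, mul_smul_comm, Matrix.mul_assoc]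
  rw [hR, hL, h1, h2, h3, hm, hp]
  simp only [Matrix.sub_mul, Matrix.add_mul, smul_mul_assoc, mul_smul_comm, smul_sub,
    smul_add, Matrix.mul_sub, Matrix.mul_add, Matrix.mul_assoc]
  module

/-- Derivative of the "boundary term" `Φ`. -/
theorem phi_deriv {G G1 G2 M M1 M2 P P1 F F1 F2 : ℝ → Matrix (Fin N) (Fin N) ℂ} {x : ℝ}
    (eG : EDeriv G (G1 x) x) (eG1 : EDeriv G1 (G2 x) x)
    (eM : EDeriv M (M1 x) x) (eM1 : EDeriv M1 (M2 x) x)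
    (eP : EDeriv P (P1 x) x)
    (eF : EDeriv F (F1 x) x) (eF1 : EDeriv F1 (F2 x) x) :
    EDeriv (fun y => (1/2 : ℂ) • ((G1 y)ᴴ * M y * F y - (G y)ᴴ * M y * F1 y
        + (G y)ᴴ * M1 y * F y) - (G y)ᴴ * P y * F y)
      ((1/2 : ℂ) • ((G2 x)ᴴ * M x * F x) + (G1 x)ᴴ * (M1 x - P x) * F x
        + (1/2 : ℂ) • ((G x)ᴴ * M2 x * F x) - (G x)ᴴ * P1 x * F x
        - (1/2 : ℂ) • ((G x)ᴴ * M x * F2 x) - (G x)ᴴ * P x * F1 x) x := by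
  have h1 := (eG1.conjT.mul eM).mul eF
  have h2 := (eG.conjT.mul eM).mul eF1
  have h3 := (eG.conjT.mul eM1).mul eF
  have h4 := (eG.conjT.mul eP).mul eF
  have H := (((h1.sub h2).add h3).smulc (1/2 : ℂ)).sub h4
  refine H.congr_val ?_
  simp only [Matrix.sub_mul, Matrix.add_mul, smul_mul_assoc, mul_smul_comm, smul_sub,
    smul_add, Matrix.mul_sub, Matrix.mul_add, Matrix.mul_assoc]
  module

/-- The key reduction: if `R - L` is on `S` the (entrywise) derivative of a function `Φ`
supported in a compact subset `T` of `S`, then `L` and `R` have equal integrals. -/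
theorem key {S T : Set ℝ} (hSo : IsOpen S) (hT : IsCompact T) (hTc : IsClosed T)
    (hTS : T ⊆ S) (L R Φ Ψ : ℝ → Matrix (Fin N) (Fin N) ℂ)
    (hLC : EC L S) (hL0 : ∀ x ∉ T, L x = 0)
    (hRC : EC R S) (hR0 : ∀ x ∉ T, R x = 0)
    (hΨC : EC Ψ S) (hΨ0 : ∀ x ∉ T, Ψ x = 0)
    (hΦ0 : ∀ x ∉ T, Φ x = 0)
    (hd : ∀ x ∈ S, EDeriv Φ (Ψ x) x)
    (heq : ∀ x ∈ S, R x - L x = Ψ x) (i j : Fin N) :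
    ∫ x in S, L x i j = ∫ x in S, R x i j := by
  have entry0 : ∀ (f : ℝ → Matrix (Fin N) (Fin N) ℂ), (∀ x ∉ T, f x = 0) →
      ∀ x ∉ T, f x i j = 0 := fun f hf x hx => by rw [hf x hx]; rfl
  have hLc : Continuous fun x => L x i j := cont_glue hSo hTc hTS (hLC i j) (entry0 L hL0)
  have hRc : Continuous fun x => R x i j := cont_glue hSo hTc hTS (hRC i j) (entry0 R hR0)
  have hΨc : Continuous fun x => Ψ x i j := cont_glue hSo hTc hTS (hΨC i j) (entry0 Ψ hΨ0)
  have hLint : IntegrableOn (fun x => L x i j) S :=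
    (hLc.integrable_of_hasCompactSupport
      (HasCompactSupport.intro hT (entry0 L hL0))).integrableOn
  have hRint : IntegrableOn (fun x => R x i j) S :=
    (hRc.integrable_of_hasCompactSupport
      (HasCompactSupport.intro hT (entry0 R hR0))).integrableOn
  have hzero : ∫ x in S, Ψ x i j = 0 :=
    integral_deriv_zero hSo hT hTc hTS (entry0 Φ hΦ0) (entry0 Ψ hΨ0)
      (fun x hx => hd x hx i j) hΨc
  have hsub : ∫ x in S, (R x i j - L x i j) = 0 := by
    rw [setIntegral_congr_fun hSo.measurableSet
      (fun x hx => show R x i j - L x i j = Ψ x i j by rw [← heq x hx, Matrix.sub_apply])]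
    exact hzero
  rw [integral_sub hRint hLint] at hsub
  exact (sub_eq_zero.mp hsub).symm

end Stmt5Aux

open Stmt5Aux

/-- If the coefficients of `𝒜F = ½ A F'' + B F' + Q F` satisfy the symmetry
equations with respect to the weight matrix `W`, then `𝒜` is formally
self-adjoint with respect to the matrix-valued inner product
`⟨F,G⟩_W = ∫_S G* W F`. -/
theorem stmt_5 (N : ℕ) (a b : ℝ) (S : Set ℝ) (hS : S = Set.Ioo a b)
    (W A B Q : ℝ → Matrix (Fin N) (Fin N) ℂ)
    (hWA : ∀ i j, ContDiffOn ℝ 2 (fun y => (W y * A y) i j) S)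
    (hWB : ∀ i j, ContDiffOn ℝ 1 (fun y => (W y * B y) i j) S)
    (hW : ∀ i j, ContinuousOn (fun y => W y i j) S)
    (hQ : ∀ i j, ContinuousOn (fun y => Q y i j) S)
    (hsym1 : ∀ x ∈ S, (A x)ᴴ * W x = W x * A x)
    (hsym2 : ∀ x ∈ S, (B x)ᴴ * W x
      = (Matrix.of fun i j => deriv (fun y => (W y * A y) i j) x) - W x * B x)
    (hsym3 : ∀ x ∈ S, (Q x)ᴴ * W x
      = (1/2 : ℂ) • (Matrix.of fun i j => deriv (deriv fun y => (W y * A y) i j) x)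
        - (Matrix.of fun i j => deriv (fun y => (W y * B y) i j) x) + W x * Q x)
    (F G : ℝ → Matrix (Fin N) (Fin N) ℂ)
    (hF : ∀ i j, ContDiff ℝ 2 (fun y => F y i j))
    (hG : ∀ i j, ContDiff ℝ 2 (fun y => G y i j))
    (hFsupp : HasCompactSupport F) (hFS : tsupport F ⊆ S)
    (hGsupp : HasCompactSupport G) (hGS : tsupport G ⊆ S) :
    ∀ i j,
      (∫ x in S, ((G x)ᴴ * W x *
        ((1/2 : ℂ) • (A x * Matrix.of fun p q => deriv (deriv fun z => F z p q) x)
          + B x * (Matrix.of fun p q => deriv (fun z => F z p q) x)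
          + Q x * F x)) i j)
      = ∫ x in S,
          (((1/2 : ℂ) • (A x * Matrix.of fun p q => deriv (deriv fun z => G z p q) x)
            + B x * (Matrix.of fun p q => deriv (fun z => G z p q) x)
            + Q x * G x)ᴴ * W x * F x) i j := by
  intro i j
  have hSo : IsOpen S := by rw [hS]; exact isOpen_Ioo
  have hTc : IsClosed (tsupport F) := isClosed_tsupport F
  -- abbreviations
  set F1 : ℝ → Matrix (Fin N) (Fin N) ℂ :=
    fun x => Matrix.of fun p q => deriv (fun z => F z p q) x with hF1def
  set F2 : ℝ → Matrix (Fin N) (Fin N) ℂ :=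
    fun x => Matrix.of fun p q => deriv (deriv fun z => F z p q) x with hF2def
  set G1 : ℝ → Matrix (Fin N) (Fin N) ℂ :=
    fun x => Matrix.of fun p q => deriv (fun z => G z p q) x with hG1def
  set G2 : ℝ → Matrix (Fin N) (Fin N) ℂ :=
    fun x => Matrix.of fun p q => deriv (deriv fun z => G z p q) x with hG2def
  set M1 : ℝ → Matrix (Fin N) (Fin N) ℂ :=
    fun x => Matrix.of fun i' j' => deriv (fun y => (W y * A y) i' j') x with hM1def
  set M2 : ℝ → Matrix (Fin N) (Fin N) ℂ :=
    fun x => Matrix.of fun i' j' => deriv (deriv fun y => (W y * A y) i' j') x with hM2def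
  set P1 : ℝ → Matrix (Fin N) (Fin N) ℂ :=
    fun x => Matrix.of fun i' j' => deriv (fun y => (W y * B y) i' j') x with hP1def
  -- smoothness of F, G entries
  have hFC1 : ∀ p q : Fin N, ContDiff ℝ 1 (deriv fun z => F z p q) := by
    intro p q
    have h : ContDiff ℝ ((1 : ℕ) + 1) (fun z => F z p q) := by exact_mod_cast hF p q
    exact (contDiff_succ_iff_deriv.mp h).2.2
  have hGC1 : ∀ p q : Fin N, ContDiff ℝ 1 (deriv fun z => G z p q) := by
    intro p q
    have h : ContDiff ℝ ((1 : ℕ) + 1) (fun z => G z p q) := by exact_mod_cast hG p q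
    exact (contDiff_succ_iff_deriv.mp h).2.2
  -- entrywise derivative facts
  have eF : ∀ x : ℝ, EDeriv F (F1 x) x := by
    intro x p q
    simp only [hF1def, Matrix.of_apply]
    exact ((hF p q).differentiable two_ne_zero x).hasDerivAt
  have eF1 : ∀ x : ℝ, EDeriv F1 (F2 x) x := by
    intro x p q
    simp only [hF1def, hF2def, Matrix.of_apply]
    exact ((hFC1 p q).differentiable one_ne_zero x).hasDerivAt
  have eG : ∀ x : ℝ, EDeriv G (G1 x) x := by
    intro x p q
    simp only [hG1def, Matrix.of_apply]
    exact ((hG p q).differentiable two_ne_zero x).hasDerivAt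
  have eG1 : ∀ x : ℝ, EDeriv G1 (G2 x) x := by
    intro x p q
    simp only [hG1def, hG2def, Matrix.of_apply]
    exact ((hGC1 p q).differentiable one_ne_zero x).hasDerivAt
  have hWA' : ∀ i' j', ContDiffOn ℝ 1 (deriv fun y => (W y * A y) i' j') S := fun i' j' =>
    (hWA i' j').deriv_of_isOpen hSo (by norm_num)
  have eM : ∀ x ∈ S, EDeriv (fun y => W y * A y) (M1 x) x := by
    intro x hx i' j'
    simp only [hM1def, Matrix.of_apply]
    exact (((hWA i' j').contDiffAt (hSo.mem_nhds hx)).differentiableAt two_ne_zero).hasDerivAt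
  have eM1 : ∀ x ∈ S, EDeriv M1 (M2 x) x := by
    intro x hx i' j'
    simp only [hM1def, hM2def, Matrix.of_apply]
    exact (((hWA' i' j').contDiffAt (hSo.mem_nhds hx)).differentiableAt one_ne_zero).hasDerivAt
  have eP : ∀ x ∈ S, EDeriv (fun y => W y * B y) (P1 x) x := by
    intro x hx i' j'
    simp only [hP1def, Matrix.of_apply]
    exact (((hWB i' j').contDiffAt (hSo.mem_nhds hx)).differentiableAt one_ne_zero).hasDerivAt
  -- entrywise continuity facts
  have ECF : EC F S := fun p q => (hF p q).continuous.continuousOn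
  have ECG : EC G S := fun p q => (hG p q).continuous.continuousOn
  have ECF1 : EC F1 S := fun p q => by
    simp only [hF1def, Matrix.of_apply]
    exact (hFC1 p q).continuous.continuousOn
  have ECG1 : EC G1 S := fun p q => by
    simp only [hG1def, Matrix.of_apply]
    exact (hGC1 p q).continuous.continuousOn
  have ECF2 : EC F2 S := fun p q => by
    simp only [hF2def, Matrix.of_apply]
    exact ((hFC1 p q).continuous_deriv le_rfl).continuousOn
  have ECG2 : EC G2 S := fun p q => by
    simp only [hG2def, Matrix.of_apply]
    exact ((hGC1 p q).continuous_deriv le_rfl).continuousOn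
  have ECM : EC (fun y => W y * A y) S := fun i' j' => (hWA i' j').continuousOn
  have ECP : EC (fun y => W y * B y) S := fun i' j' => (hWB i' j').continuousOn
  have ECM1 : EC M1 S := fun i' j' => by
    simp only [hM1def, Matrix.of_apply]
    exact (hWA' i' j').continuousOn
  have ECM2 : EC M2 S := fun i' j' => by
    simp only [hM2def, Matrix.of_apply]
    exact (hWA' i' j').continuousOn_deriv_of_isOpen hSo le_rfl
  have ECP1 : EC P1 S := fun i' j' => by
    simp only [hP1def, Matrix.of_apply]
    exact (hWB i' j').continuousOn_deriv_of_isOpen hSo le_rfl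
  -- vanishing of F, F1, F2 outside the support of F
  have hF0 : ∀ x ∉ tsupport F, F x = 0 := fun x hx => image_eq_zero_of_notMem_tsupport hx
  have hF10 : ∀ x ∉ tsupport F, F1 x = 0 := by
    intro x hx
    have hmem : (tsupport F)ᶜ ∈ 𝓝 x := hTc.isOpen_compl.mem_nhds hx
    ext p q
    have hev : (fun z => F z p q) =ᶠ[𝓝 x] fun _ => (0 : ℂ) := by
      filter_upwards [hmem] with y hy
      rw [image_eq_zero_of_notMem_tsupport hy]; rfl
    simp only [hF1def, Matrix.of_apply, Matrix.zero_apply]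
    rw [hev.deriv_eq]
    exact deriv_const x 0
  have hF20 : ∀ x ∉ tsupport F, F2 x = 0 := by
    intro x hx
    have hmem : (tsupport F)ᶜ ∈ 𝓝 x := hTc.isOpen_compl.mem_nhds hx
    ext p q
    have hev : (deriv fun z => F z p q) =ᶠ[𝓝 x] fun _ => (0 : ℂ) := by
      filter_upwards [hmem] with y hy
      have h0 : F1 y = 0 := hF10 y hy
      have : F1 y p q = (0 : Matrix (Fin N) (Fin N) ℂ) p q := by rw [h0]
      simpa [hF1def] using this
    simp only [hF2def, Matrix.of_apply, Matrix.zero_apply]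
    rw [hev.deriv_eq]
    exact deriv_const x 0
  -- the four functions for `key`
  set L : ℝ → Matrix (Fin N) (Fin N) ℂ := fun x => (G x)ᴴ * W x *
      ((1/2 : ℂ) • (A x * F2 x) + B x * F1 x + Q x * F x) with hLdef
  set R : ℝ → Matrix (Fin N) (Fin N) ℂ := fun x =>
      ((1/2 : ℂ) • (A x * G2 x) + B x * G1 x + Q x * G x)ᴴ * W x * F x with hRdef
  set Φ : ℝ → Matrix (Fin N) (Fin N) ℂ := fun y =>
      (1/2 : ℂ) • ((G1 y)ᴴ * (W y * A y) * F y - (G y)ᴴ * (W y * A y) * F1 y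
        + (G y)ᴴ * M1 y * F y) - (G y)ᴴ * (W y * B y) * F y with hΦdef
  set Ψ : ℝ → Matrix (Fin N) (Fin N) ℂ := fun x =>
      (1/2 : ℂ) • ((G2 x)ᴴ * (W x * A x) * F x) + (G1 x)ᴴ * (M1 x - W x * B x) * F x
        + (1/2 : ℂ) • ((G x)ᴴ * M2 x * F x) - (G x)ᴴ * P1 x * F x
        - (1/2 : ℂ) • ((G x)ᴴ * (W x * A x) * F2 x) - (G x)ᴴ * (W x * B x) * F1 x with hΨdef
  -- vanishing outside tsupport F
  have hL0 : ∀ x ∉ tsupport F, L x = 0 := by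
    intro x hx
    simp only [hLdef]
    rw [hF0 x hx, hF10 x hx, hF20 x hx]
    simp
  have hR0 : ∀ x ∉ tsupport F, R x = 0 := by
    intro x hx
    simp only [hRdef]
    rw [hF0 x hx]
    simp
  have hΦ0 : ∀ x ∉ tsupport F, Φ x = 0 := by
    intro x hx
    simp only [hΦdef]
    rw [hF0 x hx, hF10 x hx]
    simp
  have hΨ0 : ∀ x ∉ tsupport F, Ψ x = 0 := by
    intro x hx
    simp only [hΨdef]
    rw [hF0 x hx, hF10 x hx, hF20 x hx]
    simp
  -- continuity on S
  have hΨC : EC Ψ S := by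
    simp only [hΨdef]
    exact ((((((ECG2.conjT.mul ECM).mul ECF).smulc (1/2 : ℂ)).add
      ((ECG1.conjT.mul (ECM1.sub ECP)).mul ECF)).add
      (((ECG.conjT.mul ECM2).mul ECF).smulc (1/2 : ℂ))).sub
      ((ECG.conjT.mul ECP1).mul ECF)).sub
      (((ECG.conjT.mul ECM).mul ECF2).smulc (1/2 : ℂ)) |>.sub
      ((ECG.conjT.mul ECP).mul ECF1)
  have hLeq : ∀ x, L x = (1/2 : ℂ) • ((G x)ᴴ * (W x * A x) * F2 x)
      + (G x)ᴴ * (W x * B x) * F1 x + (G x)ᴴ * (W x * Q x) * F x := by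
    intro x
    simp only [hLdef]
    simp [Matrix.mul_add, mul_smul_comm, Matrix.mul_assoc]
  have hLC : EC L S := by
    have hLt : EC (fun x => (1/2 : ℂ) • ((G x)ᴴ * (W x * A x) * F2 x)
        + (G x)ᴴ * (W x * B x) * F1 x + (G x)ᴴ * (W x * Q x) * F x) S :=
      ((((ECG.conjT.mul ECM).mul ECF2).smulc (1/2 : ℂ)).add
        ((ECG.conjT.mul ECP).mul ECF1)).add
        ((ECG.conjT.mul (EC.mul hW hQ)).mul ECF)
    intro p q
    exact (hLt p q).congr fun x _ => by rw [hLeq x]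
  have heq : ∀ x ∈ S, R x - L x = Ψ x := by
    intro x hx
    simp only [hLdef, hRdef, hΨdef]
    exact main_calc (W x) (A x) (B x) (Q x) (F x) (F1 x) (F2 x) (G x) (G1 x) (G2 x)
      (W x * A x) (M1 x) (M2 x) (W x * B x) (P1 x) rfl rfl (hsym1 x hx)
      (by simp only [hM1def]; exact hsym2 x hx)
      (by simp only [hM2def, hP1def]; exact hsym3 x hx)
  have hRC : EC R S := by
    have hRt : EC (fun x => Ψ x + L x) S := hΨC.add hLC
    intro p q
    refine (hRt p q).congr fun x hx => ?_
    have : R x = Ψ x + L x := by rw [← heq x hx]; abel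
    rw [this]
  have hd : ∀ x ∈ S, EDeriv Φ (Ψ x) x := by
    intro x hx
    simp only [hΦdef, hΨdef]
    exact phi_deriv (eG x) (eG1 x) (eM x hx) (eM1 x hx) (eP x hx) (eF x) (eF1 x)
  exact key hSo hFsupp hTc hFS L R Φ Ψ hLC hL0 hRC hR0 hΨC hΨ0 hΦ0 hd heq i j
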